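/- Let σ₁, σ₂ > 0, U > 0 and 0 < K ≤ U, and let 𝐊 = U + (U − K)·σ₂/σ₁. Then P^σ(U,K,τ) is asymptotically equivalent to C^σ(U,𝐊,τ) as τ → 0+, i.e. lim_{τ→0+} P^σ(U,K,τ) / C^σ(U,𝐊,τ) = 1. -/

import Mathlib

open MeasureTheory Filter Set

/-- Standard normal cumulative distribution function. -/
noncomputable def stdNormalCDF (x : ℝ) : ℝ :=
  (Real.sqrt (2 * Real.pi))⁻¹ * ∫ y in Set.Iic x, Real.exp (-(y ^ 2) / 2)

/-- Black–Scholes call price with zero interest and dividend rates. -/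
noncomputable def bsCall (S K τ σ : ℝ) : ℝ :=
  let d1 := (Real.log (S / K) + σ ^ 2 * τ / 2) / (σ * Real.sqrt τ)
  S * stdNormalCDF d1 - K * stdNormalCDF (d1 - σ * Real.sqrt τ)

/-- Black–Scholes put price with zero interest and dividend rates. -/
noncomputable def bsPut (S K τ σ : ℝ) : ℝ := bsCall S K τ σ - S + K

/-- The denominator appearing in the PCLVG call price formula. -/
noncomputable def pclvgD (σ1 σ2 U τ : ℝ) : ℝ :=
  1 / σ1 + 1 / σ2 - (1 / σ2 - 1 / σ1) * Real.exp (-2 * U / (σ1 * τ))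

/-- The explicit PCLVG call price `C^σ(U,K,τ)`. -/
noncomputable def pclvgCall (σ1 σ2 U K τ : ℝ) : ℝ :=
  if K < U then
    (U - K) +
      τ * Real.exp (-(U - K) / (σ1 * τ)) * (1 - Real.exp (-2 * K / (σ1 * τ))) /
        pclvgD σ1 σ2 U τ
  else
    τ * Real.exp (-(K - U) / (σ2 * τ)) * (1 - Real.exp (-2 * U / (σ1 * τ))) /
      pclvgD σ1 σ2 U τ

/-- The PCLVG put price `P^σ(U,K,τ) = C^σ(U,K,τ) − (U − K)`. -/
noncomputable def pclvgPut (σ1 σ2 U K τ : ℝ) : ℝ := pclvgCall σ1 σ2 U K τ - (U - K)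

/-- Asymptotic equivalence of the OTM put price and the single-call price with
strike `𝐊 = U + (U−K)σ₂/σ₁` as `τ → 0+`: the ratio tends to `1`. -/
theorem pclvg_put_call_asymptotic_equiv (σ1 σ2 U K : ℝ)
    (h1 : 0 < σ1) (h2 : 0 < σ2) (hU : 0 < U) (hK : 0 < K) (hKU : K ≤ U) :
    Filter.Tendsto
      (fun τ : ℝ => pclvgPut σ1 σ2 U K τ / pclvgCall σ1 σ2 U (U + (U - K) * σ2 / σ1) τ)
      (nhdsWithin 0 (Set.Ioi 0)) (nhds 1) := by
  -- auxiliary limit: exp(-2c/(σ1 τ)) → 0 as τ → 0+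
  have hexp : ∀ c : ℝ, 0 < c →
      Filter.Tendsto (fun τ : ℝ => Real.exp (-2 * c / (σ1 * τ)))
        (nhdsWithin 0 (Set.Ioi 0)) (nhds 0) := by
    intro c hc
    have h1' : Filter.Tendsto (fun τ : ℝ => (2 * c / σ1) * τ⁻¹)
        (nhdsWithin 0 (Set.Ioi 0)) Filter.atTop :=
      Filter.Tendsto.const_mul_atTop (by positivity) tendsto_inv_nhdsGT_zero
    have h2' : Filter.Tendsto (fun τ : ℝ => -2 * c / (σ1 * τ))
        (nhdsWithin 0 (Set.Ioi 0)) Filter.atBot := by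
      have := Filter.tendsto_neg_atTop_atBot.comp h1'
      refine this.congr (fun τ => ?_)
      simp only [Function.comp_apply]; ring
    exact Real.tendsto_exp_atBot.comp h2'
  -- the limit of the simplified ratio
  have hf : Filter.Tendsto
      (fun τ : ℝ => (1 - Real.exp (-2 * K / (σ1 * τ))) / (1 - Real.exp (-2 * U / (σ1 * τ))))
      (nhdsWithin 0 (Set.Ioi 0)) (nhds 1) := by
    have hnum := (tendsto_const_nhds (x := (1:ℝ))).sub (hexp K hK)
    have hden := (tendsto_const_nhds (x := (1:ℝ))).sub (hexp U hU)
    have := hnum.div hden (by norm_num)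
    simpa only [sub_zero, div_one, Pi.div_def] using this
  refine hf.congr' ?_
  filter_upwards [self_mem_nhdsWithin] with τ (hτ : 0 < τ)
  have hστ : 0 < σ1 * τ := by positivity
  have hD : 0 < pclvgD σ1 σ2 U τ := by
    have he0 : 0 < Real.exp (-2 * U / (σ1 * τ)) := Real.exp_pos _
    have he1 : Real.exp (-2 * U / (σ1 * τ)) < 1 :=
      Real.exp_lt_one_iff.mpr (div_neg_of_neg_of_pos (by nlinarith) (by nlinarith))
    have ha : 0 < 1 / σ1 := by positivity
    have hb : 0 < 1 / σ2 := by positivity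
    unfold pclvgD
    nlinarith
  have hB : 0 < 1 - Real.exp (-2 * U / (σ1 * τ)) := by
    have : Real.exp (-2 * U / (σ1 * τ)) < 1 :=
      Real.exp_lt_one_iff.mpr (div_neg_of_neg_of_pos (by nlinarith) (by nlinarith))
    linarith
  have hKexp : Real.exp (-(U + (U - K) * σ2 / σ1 - U) / (σ2 * τ))
      = Real.exp (-(U - K) / (σ1 * τ)) := by
    congr 1
    field_simp
    ring
  have hKnotlt : ¬ (U + (U - K) * σ2 / σ1 < U) := by
    have : 0 ≤ (U - K) * σ2 / σ1 :=
      div_nonneg (mul_nonneg (by linarith) h2.le) h1.le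
    linarith
  rcases lt_or_eq_of_le hKU with hlt | heq
  · -- K < U
    have hc : τ * Real.exp (-(U - K) / (σ1 * τ)) / pclvgD σ1 σ2 U τ ≠ 0 := by
      have : 0 < τ * Real.exp (-(U - K) / (σ1 * τ)) / pclvgD σ1 σ2 U τ := by positivity
      exact ne_of_gt this
    simp only [pclvgPut, pclvgCall, if_pos hlt, if_neg hKnotlt, hKexp]
    rw [show (U - K) + τ * Real.exp (-(U - K) / (σ1 * τ)) * (1 - Real.exp (-2 * K / (σ1 * τ))) /
        pclvgD σ1 σ2 U τ - (U - K)
      = (τ * Real.exp (-(U - K) / (σ1 * τ)) / pclvgD σ1 σ2 U τ) *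
        (1 - Real.exp (-2 * K / (σ1 * τ))) by ring]
    rw [show τ * Real.exp (-(U - K) / (σ1 * τ)) * (1 - Real.exp (-2 * U / (σ1 * τ))) /
        pclvgD σ1 σ2 U τ
      = (τ * Real.exp (-(U - K) / (σ1 * τ)) / pclvgD σ1 σ2 U τ) *
        (1 - Real.exp (-2 * U / (σ1 * τ))) by ring]
    rw [mul_div_mul_left _ _ hc]
  · -- K = U
    subst heq
    simp only [pclvgPut, pclvgCall, sub_self, zero_mul, zero_div, add_zero, lt_irrefl,
      if_false, sub_zero]
    have hX : 0 < τ * Real.exp (-0 / (σ2 * τ)) * (1 - Real.exp (-2 * K / (σ1 * τ))) /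
        pclvgD σ1 σ2 K τ := div_pos (mul_pos (mul_pos hτ (Real.exp_pos _)) hB) hD
    rw [div_self hX.ne', div_self hB.ne']
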